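/- For λ₁, λ₂, w₂ ∈ ℝ with |λ₁| ≤ 1, |λ₂| ≤ 1, |w₂| ≤ 1, the matrix χ = (1/2)[[1+λ₁+λ₂, 0, w₂],[0, 1+λ₁-λ₂, 0],[w₂, 0, 1-λ₁+λ₂]] is positive semidefinite if and only if 1+λ₁-λ₂ ≥ 0 and w₂² ≤ (λ₂+1)² - λ₁². -/

import Mathlib

set_option maxHeartbeats 1000000 in
theorem stmt_10 (l₁ l₂ w₂ : ℝ) (h₁ : |l₁| ≤ 1) (h₂ : |l₂| ≤ 1) (hw : |w₂| ≤ 1) :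
    let χ : Matrix (Fin 3) (Fin 3) ℝ :=
      ((1:ℝ)/2) • !![1 + l₁ + l₂, 0, w₂; 0, 1 + l₁ - l₂, 0; w₂, 0, 1 - l₁ + l₂]
    χ.PosSemidef ↔ (1 + l₁ - l₂ ≥ 0 ∧ w₂ ^ 2 ≤ (l₂ + 1) ^ 2 - l₁ ^ 2) := by
  intro χ
  show (((1:ℝ)/2) • !![1 + l₁ + l₂, 0, w₂; 0, 1 + l₁ - l₂, 0; w₂, 0, 1 - l₁ + l₂]).PosSemidef ↔ _
  rw [Matrix.posSemidef_iff_dotProduct_mulVec]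
  constructor
  · rintro ⟨hH, hq⟩
    have hb := hq ![0,1,0]
    have ha := hq ![1,0,0]
    have hc := hq ![0,0,1]
    have hA := hq ![w₂,0,-(1+l₁+l₂)]
    have hC := hq ![-(1-l₁+l₂),0,w₂]
    have hD := hq ![1,0,-w₂]
    simp [Matrix.mulVec, dotProduct, Fin.sum_univ_three] at hb ha hc hA hC hD
    refine ⟨by linarith, ?_⟩
    nlinarith [sq_nonneg w₂, sq_nonneg (l₂+1), mul_self_nonneg w₂]
  · rintro ⟨hb, hw2⟩
    have hsum : (1 + l₁ + l₂) + (1 - l₁ + l₂) ≥ 0 := by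
      have := abs_le.mp h₂; linarith
    have hprod : (1 + l₁ + l₂) * (1 - l₁ + l₂) ≥ w₂^2 := by nlinarith
    have ha : 1 + l₁ + l₂ ≥ 0 := by nlinarith [sq_nonneg w₂]
    have hc : 1 - l₁ + l₂ ≥ 0 := by nlinarith [sq_nonneg w₂]
    constructor
    · show Matrix.conjTranspose _ = _
      ext i j
      fin_cases i <;> fin_cases j <;> simp [Matrix.conjTranspose, Matrix.vecHead, Matrix.vecTail]
    · intro x
      simp only [Matrix.mulVec, dotProduct, Fin.sum_univ_three]
      simp
      rcases eq_or_lt_of_le hsum with h0 | hpos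
      · have ha0 : 1 + l₁ + l₂ = 0 := by linarith
        have hc0 : 1 - l₁ + l₂ = 0 := by linarith
        have hw0 : w₂ = 0 := by nlinarith [sq_nonneg w₂]
        rw [ha0, hc0, hw0]
        nlinarith [mul_nonneg hb (sq_nonneg (x 1))]
      · nlinarith [sq_nonneg ((1+l₁+l₂) * x 0 + w₂ * x 2),
          sq_nonneg ((1-l₁+l₂) * x 2 + w₂ * x 0),
          mul_nonneg (sub_nonneg.2 hprod) (sq_nonneg (x 0)),
          mul_nonneg (sub_nonneg.2 hprod) (sq_nonneg (x 2)),
          mul_nonneg hb (sq_nonneg (x 1)), hpos.le]
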